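/- For every complex number s with Re(s) > 3/2, ∑_{k=1}^{∞} (φ(4k²)/2)·(2k)^{−2s} = 2^{−2s} · ζ(2s−2) / ζ₂(2s−1), where ζ is the Riemann zeta function and ζ₂(w) = ζ(w)·(1−2^{−w}). Equivalently, this sum equals (2^{−2s}/(1−2^{−(2s−2)})) · ∏_{p odd prime} (1−p^{1−2s})/(1−p^{2−2s}). -/

import Mathlib

open Complex LSeries
open scoped LSeries.notation

namespace TotientAux

lemma hasProd_inv {ι : Type*} {f : ι → ℂ} {a : ℂ} (h : HasProd f a) (ha : a ≠ 0) :
    HasProd (fun i => (f i)⁻¹) a⁻¹ := by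
  refine (Filter.Tendsto.inv₀ h ha).congr fun s => ?_
  exact (Finset.prod_inv_distrib _).symm

lemma norm_two_cpow (z : ℂ) : ‖(2 : ℂ) ^ z‖ = (2 : ℝ) ^ z.re := by
  rw [show (2 : ℂ) = ((2 : ℝ) : ℂ) by norm_num,
    Complex.norm_cpow_eq_rpow_re_of_pos (by norm_num)]

lemma one_sub_two_cpow_ne_zero {z : ℂ} (hz : z.re < 0) : (1 : ℂ) - 2 ^ z ≠ 0 := by
  intro h
  have h2 : (2 : ℂ) ^ z = 1 := by linear_combination -h
  have hn := norm_two_cpow z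
  rw [h2] at hn
  simp only [norm_one] at hn
  have : (2 : ℝ) ^ z.re < 1 := by
    rw [show (1 : ℝ) = (2:ℝ) ^ (0:ℝ) by simp]
    exact Real.rpow_lt_rpow_of_exponent_lt (by norm_num) hz
  simp_all

lemma totient_sq (n : ℕ) (hn : 0 < n) : Nat.totient (n * n) = n * Nat.totient n := by
  have h := Nat.totient_gcd_mul_totient_mul n n
  rw [Nat.gcd_self] at h
  have hpos : 0 < Nat.totient n := Nat.totient_pos.mpr hn
  nlinarith [h]

lemma LSeriesSummable_totient {w : ℂ} (hw : 2 < w.re) :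
    LSeriesSummable (fun n : ℕ => (Nat.totient n : ℂ)) w := by
  refine LSeriesSummable_of_le_const_mul_rpow (x := 2) hw ⟨1, fun n hn => ?_⟩
  have h0 : ‖((Nat.totient n : ℂ))‖ = (Nat.totient n : ℝ) := by
    simp [Complex.norm_natCast]
  rw [h0, one_mul]
  have h1 : (Nat.totient n : ℝ) ≤ (n : ℝ) := by exact_mod_cast Nat.totient_le n
  have h2 : ((n : ℝ)) = (n:ℝ) ^ ((2:ℝ) - 1) := by norm_num
  linarith [h2 ▸ h1]

lemma LSeries_totient_eq {w : ℂ} (hw : 2 < w.re) :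
    LSeries (fun n : ℕ => (Nat.totient n : ℂ)) w = riemannZeta (w - 1) / riemannZeta w := by
  set f : ℕ → ℂ := fun n => (Nat.totient n : ℂ) with hf_def
  have hw1 : 1 < w.re := by linarith
  have hf : LSeriesSummable f w := LSeriesSummable_totient hw
  have h1 : LSeriesSummable 1 w := LSeriesSummable_one_iff.mpr hw1
  have hconv : f ⍟ 1 = fun n : ℕ => (n : ℂ) := by
    funext n
    rw [LSeries.convolution_def]
    rcases eq_or_ne n 0 with rfl | hn
    · simp
    · change ∑ p ∈ n.divisorsAntidiagonal, f p.1 * (1 : ℕ → ℂ) p.2 = (n : ℂ)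
      rw [Nat.sum_divisorsAntidiagonal (fun a b => f a * (1 : ℕ → ℂ) b)]
      simp only [Pi.one_apply, mul_one, hf_def]
      rw [← Nat.cast_sum]
      norm_cast
      exact Nat.sum_totient n
  have hmul := LSeries_convolution' hf h1
  rw [hconv] at hmul
  have hid : LSeries (fun n : ℕ => (n : ℂ)) w = riemannZeta (w - 1) := by
    have heq : LSeries (fun n : ℕ => (n : ℂ)) w = LSeries 1 (w - 1) := by
      unfold LSeries
      refine tsum_congr fun n => ?_
      rcases eq_or_ne n 0 with rfl | hn
      · simp [LSeries.term]
      · rw [LSeries.term_of_ne_zero hn, LSeries.term_of_ne_zero hn, Pi.one_apply]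
        have hne : (n : ℂ) ≠ 0 := Nat.cast_ne_zero.mpr hn
        rw [cpow_sub _ _ hne]
        field_simp
        rw [cpow_one]
    rw [heq, LSeries_one_eq_riemannZeta (by simp [Complex.sub_re]; linarith)]
  have hz : LSeries 1 w = riemannZeta w := LSeries_one_eq_riemannZeta hw1
  have hzne : riemannZeta w ≠ 0 := riemannZeta_ne_zero_of_one_lt_re hw1
  rw [hid, hz] at hmul
  rw [eq_div_iff hzne]
  exact hmul.symm

lemma hasProd_odd_euler {z : ℂ} (hz : 1 < z.re) :
    HasProd (fun p : {p : ℕ // p.Prime ∧ p ≠ 2} => (1 - ((p : ℕ) : ℂ) ^ (-z))⁻¹)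
      (riemannZeta z * (1 - 2 ^ (-z))) := by
  set χ : DirichletCharacter ℂ 2 := 1 with hχ
  have hval : L ↗χ z = riemannZeta z * (1 - 2 ^ (-z)) := by
    have hz1 : z ≠ 1 := by
      intro h; rw [h] at hz; simp at hz
    rw [← DirichletCharacter.LFunction_eq_LSeries χ hz]
    have := DirichletCharacter.LFunctionTrivChar_eq_mul_riemannZeta (N := 2) hz1
    rw [show DirichletCharacter.LFunctionTrivChar 2 = χ.LFunction from rfl] at this
    rw [this, Nat.Prime.primeFactors Nat.prime_two]
    rw [Finset.prod_singleton]
    push_cast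
    ring
  have h := DirichletCharacter.LSeries_eulerProduct_hasProd χ hz
  rw [hval] at h
  set F : Nat.Primes → ℂ := fun p => (1 - χ (p : ℕ) * ((p : ℕ) : ℂ) ^ (-z))⁻¹ with hF
  have hsupp : Function.mulSupport F ⊆ {p : Nat.Primes | (p : ℕ) ≠ 2} := by
    intro p hp
    simp only [Set.mem_setOf_eq]
    intro h2
    apply hp
    have : χ ((p : ℕ) : ZMod 2)  = 0 := by
      rw [h2]
      have : ((2 : ℕ) : ZMod 2) = 0 := by decide
      rw [this]
      exact MulChar.map_nonunit χ (by simp)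
    simp only [hF, Function.mulSupport, this, mul_zero]
    norm_num
  have h2 : HasProd (fun p : {p : Nat.Primes // (p : ℕ) ≠ 2} => F p)
      (riemannZeta z * (1 - 2 ^ (-z))) :=
    (hasProd_subtype_iff_of_mulSupport_subset hsupp).mpr h
  let e : {p : ℕ // p.Prime ∧ p ≠ 2} ≃ {p : Nat.Primes // (p : ℕ) ≠ 2} :=
    { toFun := fun p => ⟨⟨p.1, p.2.1⟩, p.2.2⟩
      invFun := fun q => ⟨(q.1 : ℕ), q.1.2, q.2⟩
      left_inv := fun p => rfl
      right_inv := fun q => rfl }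
  have h3 := (e.hasProd_iff (f := fun p : {p : Nat.Primes // (p : ℕ) ≠ 2} => F p)).mpr h2
  have hfun : (fun p : {p : ℕ // p.Prime ∧ p ≠ 2} => (1 - ((p : ℕ) : ℂ) ^ (-z))⁻¹)
      = (fun p : {p : Nat.Primes // (p : ℕ) ≠ 2} => F p) ∘ e := by
    funext p
    obtain ⟨p, hp, hp2⟩ := p
    have hmod : (p : ℕ) % 2 = 1 := Nat.odd_iff.mp (hp.odd_of_ne_two hp2)
    have hcast : ((p : ℕ) : ZMod 2) = 1 := by
      rw [← ZMod.natCast_mod, hmod, Nat.cast_one]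
    simp only [Function.comp_apply, hF]
    show (1 - (p:ℂ) ^ (-z))⁻¹ = (1 - χ ((p:ℕ) : ZMod 2) * (p:ℂ) ^ (-z))⁻¹
    rw [hcast, map_one, one_mul]
  rw [hfun]
  exact h3

end TotientAux

open TotientAux

/-- `∑_{k≥1} (φ(4k²)/2)(2k)^{-2s} = 2^{-2s} ζ(2s-2)/ζ₂(2s-1)`, where
`ζ₂(w) = ζ(w)(1-2^{-w})`; equivalently it equals
`(2^{-2s}/(1-2^{-(2s-2)})) · ∏_{p odd prime} (1-p^{1-2s})/(1-p^{2-2s})`. -/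
theorem totient_square_dirichlet_series (s : ℂ) (hs : 3 / 2 < s.re) :
    (∑' k : ℕ+, ((Nat.totient (4 * (k : ℕ) ^ 2) : ℂ) / 2) * ((2 * (k : ℕ) : ℂ) ^ (-2 * s)))
        = 2 ^ (-2 * s) * riemannZeta (2 * s - 2) /
            (riemannZeta (2 * s - 1) * (1 - 2 ^ (-(2 * s - 1)))) ∧
    (∑' k : ℕ+, ((Nat.totient (4 * (k : ℕ) ^ 2) : ℂ) / 2) * ((2 * (k : ℕ) : ℂ) ^ (-2 * s)))
        = (2 ^ (-2 * s) / (1 - 2 ^ (-(2 * s - 2)))) *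
            ∏' p : {p : ℕ // p.Prime ∧ p ≠ 2},
              (1 - ((p : ℕ) : ℂ) ^ (1 - 2 * s)) / (1 - ((p : ℕ) : ℂ) ^ (2 - 2 * s)) := by
  have hs2 : 2 < (2 * s - 1).re := by
    simp only [Complex.sub_re, Complex.mul_re, Complex.ofReal_re]
    norm_num
    linarith
  set w : ℂ := 2 * s - 1 with hw_def
  have hw2 : 2 < w.re := hs2
  -- the arithmetic function g
  set g : ℕ → ℂ := fun n => (Nat.totient n : ℂ) * (n : ℂ) ^ (-w) with hg_def
  have hterm : ∀ n : ℕ, LSeries.term (fun n : ℕ => (Nat.totient n : ℂ)) w n = g n := by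
    intro n
    rcases eq_or_ne n 0 with rfl | hn
    · simp [LSeries.term, hg_def]
    · rw [LSeries.term_of_ne_zero hn]
      show (Nat.totient n : ℂ) / (n : ℂ) ^ w = (Nat.totient n : ℂ) * (n : ℂ) ^ (-w)
      rw [cpow_neg, div_eq_mul_inv]
  have hgsum : Summable g := by
    have := LSeriesSummable_totient hw2
    rwa [LSeriesSummable, funext hterm] at this
  have hF : ∑' n : ℕ, g n = riemannZeta (w - 1) / riemannZeta w := by
    rw [← LSeries_totient_eq hw2]
    exact (tsum_congr hterm).symm
  set F : ℂ := ∑' n : ℕ, g n with hF_def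
  -- sums over ℕ+
  have hcoe_inj : Function.Injective (fun k : ℕ+ => (k : ℕ)) := fun a b h => PNat.coe_injective h
  have hFp : ∑' k : ℕ+, g k = F := by
    refine Function.Injective.tsum_eq hcoe_inj fun n hn => ?_
    rcases Nat.eq_zero_or_pos n with rfl | hp
    · exfalso
      apply hn
      simp [hg_def]
    · exact ⟨⟨n, hp⟩, rfl⟩
  have hsum1 : Summable fun k : ℕ+ => g k := hgsum.comp_injective hcoe_inj
  have h2inj : Function.Injective (fun k : ℕ+ => 2 * (k : ℕ)) := by
    intro a b h
    simp only [mul_right_inj' (two_ne_zero)] at h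
    exact PNat.coe_injective h
  have hsum2 : Summable fun k : ℕ+ => g (2 * (k : ℕ)) := hgsum.comp_injective h2inj
  set A : ℂ := ∑' k : ℕ+, g (2 * (k : ℕ)) with hA_def
  have hsum3 : Summable fun k : ℕ+ => (if 2 ∣ (k : ℕ) then g k else 0) := by
    refine Summable.of_norm_bounded (summable_norm_iff.mpr hsum1) fun k => ?_
    split <;> simp
  have hreidx : ∑' k : ℕ+, (if 2 ∣ (k : ℕ) then g k else 0) = A := by
    rw [hA_def]
    have hinj2 : Function.Injective (fun j : ℕ+ => 2 * j) := fun a b h => by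
      have : (2 * a : ℕ+) = 2 * b := h
      exact mul_left_cancel this
    have key := Function.Injective.tsum_eq (f := fun k : ℕ+ => if 2 ∣ (k : ℕ) then g k else 0)
      hinj2 (fun k hk => ?_)
    · rw [← key]
      refine tsum_congr fun j => ?_
      have hd : 2 ∣ ((2 * j : ℕ+) : ℕ) := ⟨(j : ℕ), by simp [PNat.mul_coe]⟩
      show (if 2 ∣ ((2 * j : ℕ+) : ℕ) then g ((2 * j : ℕ+) : ℕ) else 0) = g (2 * (j : ℕ))
      rw [if_pos hd]
      congr 1
    · have hdvd : 2 ∣ (k : ℕ) := by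
        by_contra hd
        apply hk
        show (if 2 ∣ (k : ℕ) then g k else 0) = 0
        rw [if_neg hd]
      obtain ⟨m, hm⟩ := hdvd
      have hmpos : 0 < m := by
        rcases Nat.eq_zero_or_pos m with rfl | h
        · exfalso; have := k.pos; omega
        · exact h
      refine ⟨⟨m, hmpos⟩, ?_⟩
      apply PNat.coe_injective
      simp [PNat.mul_coe, hm]
      rfl
  have heqk : ∀ k : ℕ+, g (2 * (k : ℕ)) = 2 ^ (-w) * (g k + if 2 ∣ (k : ℕ) then g k else 0) := by
    intro k
    have hn : ((k : ℕ) : ℂ) ≠ 0 := by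
      exact_mod_cast (Nat.pos_of_ne_zero (PNat.ne_zero k)).ne'
    have hcpow : ((2 * (k : ℕ) : ℕ) : ℂ) ^ (-w) = 2 ^ (-w) * ((k : ℕ) : ℂ) ^ (-w) := by
      have hc : ((2 * (k : ℕ) : ℕ) : ℂ) = ((2 : ℝ) : ℂ) * (((k : ℕ) : ℝ) : ℂ) := by
        push_cast; ring
      rw [hc, mul_cpow_ofReal_nonneg (by norm_num) (Nat.cast_nonneg _)]
      norm_num
    by_cases hdvd : 2 ∣ (k : ℕ)
    · have ht : Nat.totient (2 * (k : ℕ)) = 2 * Nat.totient (k : ℕ) :=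
        Nat.totient_mul_of_prime_of_dvd Nat.prime_two hdvd
      rw [if_pos hdvd, hg_def]
      simp only []
      rw [ht, hcpow]
      push_cast
      ring
    · have hcop : Nat.Coprime 2 (k : ℕ) := (Nat.prime_two.coprime_iff_not_dvd).mpr hdvd
      have ht : Nat.totient (2 * (k : ℕ)) = Nat.totient (k : ℕ) := by
        rw [Nat.totient_mul hcop, Nat.totient_two, one_mul]
      rw [if_neg hdvd, hg_def]
      simp only []
      rw [ht, hcpow]
      push_cast
      ring
  have hA : A = 2 ^ (-w) * (F + A) := by
    calc A = ∑' k : ℕ+, 2 ^ (-w) * (g k + if 2 ∣ (k : ℕ) then g k else 0) :=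
          tsum_congr heqk
    _ = 2 ^ (-w) * ∑' k : ℕ+, (g k + if 2 ∣ (k : ℕ) then g k else 0) := tsum_mul_left
    _ = 2 ^ (-w) * ((∑' k : ℕ+, g k) + ∑' k : ℕ+, (if 2 ∣ (k : ℕ) then g k else 0)) := by
          rw [Summable.tsum_add hsum1 hsum3]
    _ = 2 ^ (-w) * (F + A) := by rw [hFp, hreidx]
  have h2w : (1 : ℂ) - 2 ^ (-w) ≠ 0 := by
    refine one_sub_two_cpow_ne_zero ?_
    simp only [Complex.neg_re]
    linarith
  have hAval : A = 2 ^ (-w) * F / (1 - 2 ^ (-w)) := by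
    rw [eq_div_iff h2w]
    linear_combination hA
  -- identify LHS
  have hLHS : (∑' k : ℕ+, ((Nat.totient (4 * (k : ℕ) ^ 2) : ℂ) / 2) * ((2 * (k : ℕ) : ℂ) ^ (-2 * s)))
      = (1/2 : ℂ) * A := by
    rw [hA_def, ← tsum_mul_left]
    refine tsum_congr fun k => ?_
    have hkpos : 0 < (k : ℕ) := k.pos
    have h4 : 4 * (k : ℕ) ^ 2 = (2 * (k : ℕ)) * (2 * (k : ℕ)) := by ring
    have htot : Nat.totient (4 * (k : ℕ) ^ 2) = (2 * (k : ℕ)) * Nat.totient (2 * (k : ℕ)) := by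
      rw [h4, totient_sq _ (by positivity)]
    have hxne : ((2 * (k : ℕ) : ℕ) : ℂ) ≠ 0 :=
      Nat.cast_ne_zero.mpr (by positivity)
    have hcpow : ((2 * (k : ℕ) : ℕ) : ℂ) ^ (-w) =
        ((2 * (k : ℕ) : ℕ) : ℂ) ^ (-2 * s) * ((2 * (k : ℕ) : ℕ) : ℂ) := by
      rw [show -w = (-2 * s) + 1 by rw [hw_def]; ring, cpow_add _ _ hxne, cpow_one]
    rw [hg_def]
    simp only []
    rw [htot, hcpow]
    push_cast
    ring
  have hmain : (∑' k : ℕ+, ((Nat.totient (4 * (k : ℕ) ^ 2) : ℂ) / 2) * ((2 * (k : ℕ) : ℂ) ^ (-2 * s)))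
      = 2 ^ (-2 * s) * (riemannZeta (2 * s - 2) / riemannZeta w) / (1 - 2 ^ (-w)) := by
    rw [hLHS, hAval, hF, show w - 1 = 2 * s - 2 by rw [hw_def]; ring]
    have h2pow : (2 : ℂ) ^ (-2 * s) = 2 ^ (-w) * (2 : ℂ)⁻¹ := by
      rw [show (-2 * s : ℂ) = (-w) + (-1) by rw [hw_def]; ring, cpow_add _ _ (two_ne_zero),
        cpow_neg_one]
    rw [h2pow]
    ring
  have hzw_ne : riemannZeta w ≠ 0 := riemannZeta_ne_zero_of_one_lt_re (by linarith)
  constructor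
  · rw [hmain]
    field_simp
  · -- Euler product form
    have hre1 : 1 < (2 * s - 1).re := by linarith [hs2]
    have hre2 : 1 < (2 * s - 2).re := by
      have h : (2 * s - 2 : ℂ).re = 2 * s.re - 2 := by
        simp [Complex.sub_re, Complex.mul_re]
      rw [h]
      linarith
    have hA1 := hasProd_odd_euler hre1
    have hB1 := hasProd_odd_euler hre2
    have hA1' : HasProd (fun p : {p : ℕ // p.Prime ∧ p ≠ 2} => (1 - ((p : ℕ) : ℂ) ^ (1 - 2 * s))⁻¹)
        (riemannZeta (2 * s - 1) * (1 - 2 ^ (-(2 * s - 1)))) := by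
      convert hA1 using 2 with p
      rw [show (1 - 2 * s : ℂ) = -(2 * s - 1) by ring]
    have hB1' : HasProd (fun p : {p : ℕ // p.Prime ∧ p ≠ 2} => (1 - ((p : ℕ) : ℂ) ^ (2 - 2 * s))⁻¹)
        (riemannZeta (2 * s - 2) * (1 - 2 ^ (-(2 * s - 2)))) := by
      convert hB1 using 2 with p
      rw [show (2 - 2 * s : ℂ) = -(2 * s - 2) by ring]
    have hA0ne : riemannZeta (2 * s - 1) * (1 - 2 ^ (-(2 * s - 1))) ≠ 0 := by
      refine mul_ne_zero (riemannZeta_ne_zero_of_one_lt_re hre1) ?_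
      refine one_sub_two_cpow_ne_zero ?_
      simp only [Complex.neg_re]
      linarith [hs2]
    have hinv := hasProd_inv hA1' hA0ne
    simp only [inv_inv] at hinv
    have hprod := hinv.mul hB1'
    have hprod' : HasProd (fun p : {p : ℕ // p.Prime ∧ p ≠ 2} =>
        (1 - ((p : ℕ) : ℂ) ^ (1 - 2 * s)) / (1 - ((p : ℕ) : ℂ) ^ (2 - 2 * s)))
        ((riemannZeta (2 * s - 1) * (1 - 2 ^ (-(2 * s - 1))))⁻¹ *
          (riemannZeta (2 * s - 2) * (1 - 2 ^ (-(2 * s - 2))))) := by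
      refine hprod.congr_fun fun p => ?_
      rw [div_eq_mul_inv]
    have htp := hprod'.tprod_eq
    rw [htp, hmain]
    have h22ne : (1 : ℂ) - 2 ^ (-(2 * s - 2)) ≠ 0 := by
      refine one_sub_two_cpow_ne_zero ?_
      simp only [Complex.neg_re]
      linarith [hre2]
    have h2wne : (1 : ℂ) - 2 ^ (-w) ≠ 0 := h2w
    rw [hw_def] at h2wne ⊢
    set q1 : ℂ := 2 ^ (-(2 * s - 1)) with hq1
    set q2 : ℂ := 2 ^ (-(2 * s - 2)) with hq2
    set t : ℂ := 2 ^ (-2 * s) with ht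
    set Zw : ℂ := riemannZeta (2 * s - 1) with hZw
    set Z2 : ℂ := riemannZeta (2 * s - 2) with hZ2
    have hZwne : Zw ≠ 0 := hzw_ne
    field_simp
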